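/- (Kobayashi inequality) Let A be a monotone operator on a real Hilbert space H. Let (x_k)_{k≥0} be a proximal sequence for A with stepsizes λ_k > 0, and (x̂_l)_{l≥0} a proximal sequence for A with stepsizes λ̂_l > 0. Set σ_k = λ_1 + ⋯ + λ_k, τ_k = λ_1² + ⋯ + λ_k² (with σ_0 = τ_0 = 0), and similarly σ̂_l, τ̂_l. Then for every u ∈ H, every w with (u, w) ∈ A, and all k, l ≥ 0: ‖x_k − x̂_l‖ ≤ ‖x_0 − u‖ + ‖x̂_0 − u‖ + ‖w‖ · √((σ_k − σ̂_l)² + τ_k + τ̂_l). -/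

import Mathlib

open RealInnerProductSpace Finset

private lemma norm_le_aux {H : Type*} [NormedAddCommGroup H] (d : H) (C : ℝ)
    (hC : 0 ≤ C) (h : ‖d‖ ^ 2 ≤ C * ‖d‖) : ‖d‖ ≤ C := by
  nlinarith [norm_nonneg d]

private lemma sqrt_combo (α β a b : ℝ) (hα : 0 ≤ α) (hβ : 0 ≤ β) (hab : α + β = 1)
    (ha : 0 ≤ a) (hb : 0 ≤ b) :
    α * Real.sqrt a + β * Real.sqrt b ≤ Real.sqrt (α * a + β * b) := by
  have h1 := Real.sq_sqrt ha
  have h2 := Real.sq_sqrt hb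
  have h3 := Real.sqrt_nonneg a
  have h4 := Real.sqrt_nonneg b
  rw [show α * Real.sqrt a + β * Real.sqrt b
      = Real.sqrt ((α * Real.sqrt a + β * Real.sqrt b) ^ 2) from
    (Real.sqrt_sq (by positivity)).symm]
  apply Real.sqrt_le_sqrt
  have key : α * a + β * b - (α * Real.sqrt a + β * Real.sqrt b) ^ 2
      = α * β * (Real.sqrt a - Real.sqrt b) ^ 2 := by
    linear_combination (-α) * h1 + (-β) * h2
      + (-(α * Real.sqrt a ^ 2 + β * Real.sqrt b ^ 2)) * hab
  nlinarith [mul_nonneg (mul_nonneg hα hβ) (sq_nonneg (Real.sqrt a - Real.sqrt b))]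

private lemma key_c (l m s t th : ℝ) (hl : 0 < l) (hm : 0 < m) (ht : 0 ≤ t) (hth : 0 ≤ th) :
    m * Real.sqrt ((s - l) ^ 2 + t + (th + m ^ 2)) +
      l * Real.sqrt ((s + m) ^ 2 + (t + l ^ 2) + th) ≤
      (l + m) * Real.sqrt (s ^ 2 + (t + l ^ 2) + (th + m ^ 2)) := by
  have hlm : 0 < l + m := by linarith
  have h := sqrt_combo (m / (l + m)) (l / (l + m))
      ((s - l) ^ 2 + t + (th + m ^ 2)) ((s + m) ^ 2 + (t + l ^ 2) + th)
      (by positivity) (by positivity)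
      (by rw [← add_div, add_comm m l, div_self hlm.ne']) (by positivity) (by positivity)
  have heq : m / (l + m) * ((s - l) ^ 2 + t + (th + m ^ 2))
      + l / (l + m) * ((s + m) ^ 2 + (t + l ^ 2) + th)
      = s ^ 2 + (t + l ^ 2) + (th + m ^ 2) := by
    field_simp
    ring
  rw [heq] at h
  calc m * Real.sqrt ((s - l) ^ 2 + t + (th + m ^ 2)) +
      l * Real.sqrt ((s + m) ^ 2 + (t + l ^ 2) + th)
      = (l + m) * (m / (l + m) * Real.sqrt ((s - l) ^ 2 + t + (th + m ^ 2)) +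
        l / (l + m) * Real.sqrt ((s + m) ^ 2 + (t + l ^ 2) + th)) := by
        field_simp
    _ ≤ (l + m) * Real.sqrt (s ^ 2 + (t + l ^ 2) + (th + m ^ 2)) :=
        mul_le_mul_of_nonneg_left h hlm.le

private lemma le_sqrt_of_sq_le' (S c : ℝ) (hS : 0 ≤ S) (h : S ^ 2 ≤ c) : S ≤ Real.sqrt c := by
  calc S = Real.sqrt (S ^ 2) := (Real.sqrt_sq hS).symm
    _ ≤ _ := Real.sqrt_le_sqrt h

private lemma scal1 (l I J : ℝ) (hl : 0 < l) (h : 0 ≤ l⁻¹ * I - J) : l * J ≤ I := by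
  have h2 := mul_nonneg hl.le h
  rw [mul_sub, ← mul_assoc, mul_inv_cancel₀ hl.ne', one_mul] at h2
  linarith

private lemma scal2 (l m I J : ℝ) (hl : 0 < l) (hm : 0 < m)
    (h : 0 ≤ l⁻¹ * I - m⁻¹ * J) : l * J ≤ m * I := by
  have h2 := mul_nonneg (mul_nonneg hl.le hm.le) h
  rw [mul_sub] at h2
  have e1 : l * m * (l⁻¹ * I) = m * I := by field_simp
  have e2 : l * m * (m⁻¹ * J) = l * J := by field_simp
  rw [e1, e2] at h2
  linarith

private lemma step_ineq {H : Type*} [NormedAddCommGroup H] [InnerProductSpace ℝ H]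
    (a b uu ww : H) (l : ℝ) (hl : 0 < l)
    (hmono : l * ⟪ww, b - uu⟫ ≤ ⟪a - b, b - uu⟫) :
    ‖b - uu‖ ≤ ‖a - uu‖ + l * ‖ww‖ := by
  have e1 : ⟪a - uu, b - uu⟫ = ⟪a - b, b - uu⟫ + ⟪b - uu, b - uu⟫ := by
    rw [show a - uu = (a - b) + (b - uu) by abel, inner_add_left]
  have e2 : ⟪b - uu, b - uu⟫ = ‖b - uu‖ ^ 2 := real_inner_self_eq_norm_sq _
  have e3 : ⟪a - uu, b - uu⟫ ≤ ‖a - uu‖ * ‖b - uu‖ := real_inner_le_norm _ _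
  have e4 : |⟪ww, b - uu⟫| ≤ ‖ww‖ * ‖b - uu‖ := abs_real_inner_le_norm _ _
  have e5 : -(‖ww‖ * ‖b - uu‖) ≤ ⟪ww, b - uu⟫ := neg_le_of_abs_le e4
  apply norm_le_aux _ _ (by positivity)
  nlinarith [hmono, e1, e2, e3, e5]

private lemma rec_ineq {H : Type*} [NormedAddCommGroup H] [InnerProductSpace ℝ H]
    (a b c e : H) (l m : ℝ) (hl : 0 < l) (hm : 0 < m)
    (hmono : l * ⟪c - e, b - e⟫ ≤ m * ⟪a - b, b - e⟫) :
    (l + m) * ‖b - e‖ ≤ m * ‖a - e‖ + l * ‖b - c‖ := by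
  have e1 : ⟪a - e, b - e⟫ = ⟪a - b, b - e⟫ + ⟪b - e, b - e⟫ := by
    rw [show a - e = (a - b) + (b - e) by abel, inner_add_left]
  have e2 : ⟪b - c, b - e⟫ = ⟪b - e, b - e⟫ - ⟪c - e, b - e⟫ := by
    rw [show b - c = (b - e) - (c - e) by abel, inner_sub_left]
  have e3 : ⟪b - e, b - e⟫ = ‖b - e‖ ^ 2 := real_inner_self_eq_norm_sq _
  have e4 : ⟪a - e, b - e⟫ ≤ ‖a - e‖ * ‖b - e‖ := real_inner_le_norm _ _
  have e5 : ⟪b - c, b - e⟫ ≤ ‖b - c‖ * ‖b - e‖ := real_inner_le_norm _ _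
  have key : (l + m) * ‖b - e‖ ^ 2 ≤ (m * ‖a - e‖ + l * ‖b - c‖) * ‖b - e‖ := by
    nlinarith [mul_le_mul_of_nonneg_left e4 hm.le, mul_le_mul_of_nonneg_left e5 hl.le]
  rcases eq_or_lt_of_le (norm_nonneg (b - e)) with h0 | h0
  · rw [← h0]
    have := norm_nonneg (a - e); have := norm_nonneg (b - c)
    nlinarith
  · nlinarith [key, h0]

/-- An operator (identified with its graph) is monotone. -/
def MonotoneOp {H : Type*} [NormedAddCommGroup H] [InnerProductSpace ℝ H]
    (A : Set (H × H)) : Prop :=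
  ∀ p ∈ A, ∀ q ∈ A, (0:ℝ) ≤ ⟪p.2 - q.2, p.1 - q.1⟫

/-- Kobayashi inequality: for two proximal sequences `(x_k)`, `(x̂_l)` of a
monotone operator `A` with stepsizes `(λ_k)`, `(λ̂_l)`, and any `(u, w) ∈ A`,
`‖x_k − x̂_l‖ ≤ ‖x_0 − u‖ + ‖x̂_0 − u‖ + ‖w‖√((σ_k − σ̂_l)² + τ_k + τ̂_l)`. -/
theorem stmt7 {H : Type*} [NormedAddCommGroup H] [InnerProductSpace ℝ H] [CompleteSpace H]
    (A : Set (H × H)) (hmono : MonotoneOp A)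
    (lam lamh : ℕ → ℝ)
    (hlam : ∀ k : ℕ, 0 < lam (k + 1)) (hlamh : ∀ l : ℕ, 0 < lamh (l + 1))
    (x xh : ℕ → H)
    (hx : ∀ k : ℕ, (x (k + 1), (lam (k + 1))⁻¹ • (x k - x (k + 1))) ∈ A)
    (hxh : ∀ l : ℕ, (xh (l + 1), (lamh (l + 1))⁻¹ • (xh l - xh (l + 1))) ∈ A)
    (u w : H) (huw : (u, w) ∈ A) :
    ∀ k l : ℕ,
      ‖x k - xh l‖ ≤ ‖x 0 - u‖ + ‖xh 0 - u‖ +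
        ‖w‖ * Real.sqrt
          ((∑ i ∈ range k, lam (i + 1) - ∑ j ∈ range l, lamh (j + 1)) ^ 2 +
            ∑ i ∈ range k, lam (i + 1) ^ 2 + ∑ j ∈ range l, lamh (j + 1) ^ 2) := by
  have hσ : ∀ k, 0 ≤ ∑ i ∈ range k, lam (i + 1) :=
    fun k => sum_nonneg fun i _ => (hlam i).le
  have hσh : ∀ l, 0 ≤ ∑ j ∈ range l, lamh (j + 1) :=
    fun l => sum_nonneg fun j _ => (hlamh j).le
  have hτ : ∀ k, 0 ≤ ∑ i ∈ range k, lam (i + 1) ^ 2 :=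
    fun k => sum_nonneg fun i _ => sq_nonneg _
  have hτh : ∀ l, 0 ≤ ∑ j ∈ range l, lamh (j + 1) ^ 2 :=
    fun l => sum_nonneg fun j _ => sq_nonneg _
  -- single-step estimates against (u, w)
  have hstep : ∀ k, ‖x (k + 1) - u‖ ≤ ‖x k - u‖ + lam (k + 1) * ‖w‖ := by
    intro k
    have h := hmono _ (hx k) _ huw
    simp only at h
    rw [inner_sub_left, real_inner_smul_left] at h
    exact step_ineq (x k) (x (k + 1)) u w _ (hlam k) (scal1 _ _ _ (hlam k) h)
  have hsteph : ∀ l, ‖xh (l + 1) - u‖ ≤ ‖xh l - u‖ + lamh (l + 1) * ‖w‖ := by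
    intro l
    have h := hmono _ (hxh l) _ huw
    simp only at h
    rw [inner_sub_left, real_inner_smul_left] at h
    exact step_ineq (xh l) (xh (l + 1)) u w _ (hlamh l) (scal1 _ _ _ (hlamh l) h)
  have hbound : ∀ k, ‖x k - u‖ ≤ ‖x 0 - u‖ + (∑ i ∈ range k, lam (i + 1)) * ‖w‖ := by
    intro k
    induction k with
    | zero => simp
    | succ n ih =>
      rw [sum_range_succ]
      nlinarith [hstep n, ih]
  have hboundh : ∀ l, ‖xh l - u‖ ≤ ‖xh 0 - u‖ + (∑ j ∈ range l, lamh (j + 1)) * ‖w‖ := by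
    intro l
    induction l with
    | zero => simp
    | succ n ih =>
      rw [sum_range_succ]
      nlinarith [hsteph n, ih]
  -- the Kobayashi recursion
  have hR : ∀ k l, (lam (k + 1) + lamh (l + 1)) * ‖x (k + 1) - xh (l + 1)‖ ≤
      lamh (l + 1) * ‖x k - xh (l + 1)‖ + lam (k + 1) * ‖x (k + 1) - xh l‖ := by
    intro k l
    have h := hmono _ (hx k) _ (hxh l)
    simp only at h
    rw [inner_sub_left, real_inner_smul_left, real_inner_smul_left] at h
    exact rec_ineq (x k) (x (k + 1)) (xh l) (xh (l + 1)) _ _ (hlam k) (hlamh l)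
      (scal2 _ _ _ _ (hlam k) (hlamh l) h)
  intro k
  induction k with
  | zero =>
    intro l
    simp only [range_zero, sum_empty]
    have t1 : ‖x 0 - xh l‖ ≤ ‖x 0 - u‖ + ‖xh l - u‖ := by
      calc ‖x 0 - xh l‖ = ‖(x 0 - u) - (xh l - u)‖ := by
            rw [show x 0 - xh l = (x 0 - u) - (xh l - u) by abel]
        _ ≤ ‖x 0 - u‖ + ‖xh l - u‖ := norm_sub_le _ _
    have t2 := hboundh l
    have t3 : (∑ j ∈ range l, lamh (j + 1)) ≤
        Real.sqrt ((0 - ∑ j ∈ range l, lamh (j + 1)) ^ 2 + 0 + ∑ j ∈ range l, lamh (j + 1) ^ 2) :=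
      le_sqrt_of_sq_le' _ _ (hσh l) (by nlinarith [hτh l])
    have t4 := mul_le_mul_of_nonneg_left t3 (norm_nonneg w)
    nlinarith [t1, t2, t4]
  | succ k ih =>
    intro l
    induction l with
    | zero =>
      simp only [range_zero, sum_empty]
      have t1 : ‖x (k + 1) - xh 0‖ ≤ ‖x (k + 1) - u‖ + ‖xh 0 - u‖ := by
        calc ‖x (k + 1) - xh 0‖ = ‖(x (k + 1) - u) - (xh 0 - u)‖ := by
              rw [show x (k + 1) - xh 0 = (x (k + 1) - u) - (xh 0 - u) by abel]
          _ ≤ ‖x (k + 1) - u‖ + ‖xh 0 - u‖ := norm_sub_le _ _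
      have t2 := hbound (k + 1)
      have t3 : (∑ i ∈ range (k + 1), lam (i + 1)) ≤
          Real.sqrt ((∑ i ∈ range (k + 1), lam (i + 1) - 0) ^ 2 +
            (∑ i ∈ range (k + 1), lam (i + 1) ^ 2) + 0) :=
        le_sqrt_of_sq_le' _ _ (hσ (k + 1)) (by nlinarith [hτ (k + 1)])
      have t4 := mul_le_mul_of_nonneg_left t3 (norm_nonneg w)
      nlinarith [t1, t2, t4]
    | succ l ihl =>
      have ihA := ih (l + 1)
      have hr := hR k l
      have hkey := key_c (lam (k + 1)) (lamh (l + 1))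
        ((∑ i ∈ range k, lam (i + 1) + lam (k + 1)) -
          (∑ j ∈ range l, lamh (j + 1) + lamh (l + 1)))
        (∑ i ∈ range k, lam (i + 1) ^ 2) (∑ j ∈ range l, lamh (j + 1) ^ 2)
        (hlam k) (hlamh l) (hτ k) (hτh l)
      simp only [sum_range_succ] at ihA ihl ⊢
      have e1 : (∑ i ∈ range k, lam (i + 1) + lam (k + 1)) -
          (∑ j ∈ range l, lamh (j + 1) + lamh (l + 1)) - lam (k + 1)
          = ∑ i ∈ range k, lam (i + 1) - (∑ j ∈ range l, lamh (j + 1) + lamh (l + 1)) := by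
        ring
      have e2 : (∑ i ∈ range k, lam (i + 1) + lam (k + 1)) -
          (∑ j ∈ range l, lamh (j + 1) + lamh (l + 1)) + lamh (l + 1)
          = ∑ i ∈ range k, lam (i + 1) + lam (k + 1) - ∑ j ∈ range l, lamh (j + 1) := by
        ring
      rw [e1, e2] at hkey
      have hW := mul_le_mul_of_nonneg_left hkey (norm_nonneg w)
      have hA := mul_le_mul_of_nonneg_left ihA (hlamh l).le
      have hB := mul_le_mul_of_nonneg_left ihl (hlam k).le
      have hlm : (0:ℝ) < lam (k + 1) + lamh (l + 1) := by
        have := hlam k; have := hlamh l; linarith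
      have final : (lam (k + 1) + lamh (l + 1)) * ‖x (k + 1) - xh (l + 1)‖ ≤
          (lam (k + 1) + lamh (l + 1)) * (‖x 0 - u‖ + ‖xh 0 - u‖ +
            ‖w‖ * Real.sqrt
              ((∑ i ∈ range k, lam (i + 1) + lam (k + 1) -
                  (∑ j ∈ range l, lamh (j + 1) + lamh (l + 1))) ^ 2 +
                (∑ i ∈ range k, lam (i + 1) ^ 2 + lam (k + 1) ^ 2) +
                (∑ j ∈ range l, lamh (j + 1) ^ 2 + lamh (l + 1) ^ 2))) := by
        nlinarith [hW, hA, hB, hr]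
      exact le_of_mul_le_mul_left final hlm
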